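/- arXiv:1801.06021 — 2 statements merged into one kernel-verified Lean document; each statement's English description precedes it below -/
import Mathlib

section
/- On a locally finite weighted graph, let u : V → ℝ with u ≥ ε > 0 pointwise. Then for every x ∈ V, (Δ log u(x))² ≤ (2/ε²)(Δu(x))² + (2/ε⁴)(Γ(u)(x))². In particular, if Δ log u(x) ≥ 0 then (Δ log u(x))² ≤ (1/ε²)(Δu(x))². -/
lemma key_log_lower {ε a b : ℝ} (hε : 0 < ε) (ha : ε ≤ a) (hb : ε ≤ b) :
    (b - a) / a - (b - a) ^ 2 / (2 * ε ^ 2) ≤ Real.log b - Real.log a := by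
  have hapos : 0 < a := lt_of_lt_of_le hε ha
  have hbpos : 0 < b := lt_of_lt_of_le hε hb
  set f : ℝ → ℝ := fun t => Real.log t - (t - a) / a + (t - a) ^ 2 / (2 * ε ^ 2) with hf
  have hderiv : ∀ t : ℝ, 0 < t → HasDerivAt f (1 / t - 1 / a + (t - a) / ε ^ 2) t := by
    intro t ht
    have h1 : HasDerivAt Real.log (1 / t) t := by
      simpa [one_div] using Real.hasDerivAt_log (ne_of_gt ht)
    have h2 : HasDerivAt (fun t : ℝ => (t - a) / a) (1 / a) t := by
      simpa using ((hasDerivAt_id t).sub_const a).div_const a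
    have h3 : HasDerivAt (fun t : ℝ => (t - a) ^ 2 / (2 * ε ^ 2))
        (2 * (t - a) / (2 * ε ^ 2)) t := by
      simpa using (((hasDerivAt_id t).sub_const a).pow 2).div_const (2 * ε ^ 2)
    have := (h1.sub h2).add h3
    refine HasDerivAt.congr_deriv this ?_
    ring
  have hcont : ∀ s : Set ℝ, s ⊆ Set.Ici ε → ContinuousOn f s := by
    intro s hs
    apply ContinuousOn.mono _ hs
    intro t ht
    exact (hderiv t (lt_of_lt_of_le hε ht)).continuousAt.continuousWithinAt
  have hfa : f a = Real.log a := by simp [hf]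
  -- f b ≥ f a in both cases
  have hfb : Real.log a ≤ f b := by
    rcases le_total a b with hab | hab
    · have hmono : MonotoneOn f (Set.Icc a b) := by
        apply monotoneOn_of_hasDerivWithinAt_nonneg (convex_Icc a b)
          (hcont _ (Set.Icc_subset_Ici_self.trans (Set.Ici_subset_Ici.2 ha)))
          (f' := fun t => 1 / t - 1 / a + (t - a) / ε ^ 2)
        · intro t ht
          rw [interior_Icc] at ht
          exact (hderiv t (lt_of_lt_of_le hapos ht.1.le)).hasDerivWithinAt
        · intro t ht
          rw [interior_Icc] at ht
          have hta : a < t := ht.1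
          have htpos : 0 < t := lt_trans hapos hta
          have h1 : 1 / t - 1 / a = -((t - a) / (a * t)) := by
            rw [div_sub_div _ _ (ne_of_gt htpos) (ne_of_gt hapos), neg_div', mul_comm t a]
            ring_nf
          have h2 : (t - a) / (a * t) ≤ (t - a) / ε ^ 2 := by
            apply div_le_div_of_nonneg_left (by linarith) (by positivity)
            nlinarith
          rw [h1]; linarith
      have := hmono (Set.left_mem_Icc.2 hab) (Set.right_mem_Icc.2 hab) hab
      rw [hfa] at this; exact this
    · have hanti : AntitoneOn f (Set.Icc b a) := by
        apply antitoneOn_of_hasDerivWithinAt_nonpos (convex_Icc b a)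
          (hcont _ (Set.Icc_subset_Ici_self.trans (Set.Ici_subset_Ici.2 hb)))
          (f' := fun t => 1 / t - 1 / a + (t - a) / ε ^ 2)
        · intro t ht
          rw [interior_Icc] at ht
          exact (hderiv t (lt_of_lt_of_le hbpos ht.1.le)).hasDerivWithinAt
        · intro t ht
          rw [interior_Icc] at ht
          have htpos : 0 < t := lt_of_lt_of_le hbpos ht.1.le
          have hte : ε ≤ t := le_trans hb ht.1.le
          have h1 : 1 / t - 1 / a = (a - t) / (a * t) := by
            rw [div_sub_div _ _ (ne_of_gt htpos) (ne_of_gt hapos), mul_comm t a]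
            ring_nf
          have h2 : (a - t) / (a * t) ≤ (a - t) / ε ^ 2 := by
            apply div_le_div_of_nonneg_left (by linarith [ht.2]) (by positivity)
            nlinarith
          rw [h1]
          have : (a - t) / ε ^ 2 + (t - a) / ε ^ 2 = 0 := by ring
          linarith
      have := hanti (Set.left_mem_Icc.2 hab) (Set.right_mem_Icc.2 hab) hab
      rw [hfa] at this; exact this
  simp only [hf] at hfb
  linarith

lemma key_log_upper {a b : ℝ} (ha : 0 < a) (hb : 0 < b) :
    Real.log b - Real.log a ≤ (b - a) / a := by
  have h := Real.log_le_sub_one_of_pos (div_pos hb ha)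
  rw [Real.log_div (ne_of_gt hb) (ne_of_gt ha)] at h
  have : b / a - 1 = (b - a) / a := by field_simp
  linarith [this ▸ h]
open scoped BigOperators

/-- A locally finite weighted graph on vertex set `V`. -/
structure WeightedGraph (V : Type) where
  ω : V → V → ℝ
  m : V → ℝ
  symm : ∀ x y, ω x y = ω y x
  weight_nonneg : ∀ x y, 0 ≤ ω x y
  m_pos : ∀ x, 0 < m x
  locFin : ∀ x, (Function.support (ω x)).Finite

namespace WeightedGraph

variable {V : Type} (G : WeightedGraph V)

/-- The (finite) set of neighbours of `x`. -/
noncomputable def nbrs (x : V) : Finset V := (G.locFin x).toFinset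

/-- The graph Laplacian `Δ f (x) = (1/m x) ∑_{y∼x} ω x y (f y - f x)`. -/
noncomputable def lap (f : V → ℝ) (x : V) : ℝ :=
  (1 / G.m x) * ∑ y ∈ G.nbrs x, G.ω x y * (f y - f x)

/-- The gradient form `Γ(f,g)(x)`. -/
noncomputable def grad (f g : V → ℝ) (x : V) : ℝ :=
  (1 / (2 * G.m x)) * ∑ y ∈ G.nbrs x, G.ω x y * (f y - f x) * (g y - g x)

/-- The gradient form `Γ(f)(x) = Γ(f,f)(x)`. -/
noncomputable def gradSq (f : V → ℝ) (x : V) : ℝ :=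
  (1 / (2 * G.m x)) * ∑ y ∈ G.nbrs x, G.ω x y * (f y - f x) ^ 2

end WeightedGraph

theorem lap_log_sq_bound {V : Type} (G : WeightedGraph V) (u : V → ℝ) (ε : ℝ) (hε : 0 < ε)
    (hu : ∀ x, ε ≤ u x) (x : V) :
    (G.lap (fun y => Real.log (u y)) x) ^ 2 ≤
        (2 / ε ^ 2) * (G.lap u x) ^ 2 + (2 / ε ^ 4) * (G.gradSq u x) ^ 2 ∧
    (0 ≤ G.lap (fun y => Real.log (u y)) x →
      (G.lap (fun y => Real.log (u y)) x) ^ 2 ≤ (1 / ε ^ 2) * (G.lap u x) ^ 2) := by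
  have hm : 0 < G.m x := G.m_pos x
  have hc : ε ≤ u x := hu x
  have hcpos : 0 < u x := lt_of_lt_of_le hε hc
  set L := G.lap (fun y => Real.log (u y)) x with hL
  set D := G.lap u x with hD
  set Γ := G.gradSq u x with hG
  have hΓ : 0 ≤ Γ := by
    rw [hG, WeightedGraph.gradSq]
    exact mul_nonneg (by positivity) (Finset.sum_nonneg fun y _ =>
      mul_nonneg (G.weight_nonneg x y) (sq_nonneg _))
  -- sum-level upper bound
  have hSL_le : (∑ y ∈ G.nbrs x, G.ω x y * (Real.log (u y) - Real.log (u x)))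
      ≤ (∑ y ∈ G.nbrs x, G.ω x y * (u y - u x)) / u x := by
    rw [Finset.sum_div]
    apply Finset.sum_le_sum
    intro y _
    rw [mul_div_assoc]
    exact mul_le_mul_of_nonneg_left (key_log_upper hcpos (lt_of_lt_of_le hε (hu y)))
      (G.weight_nonneg x y)
  have hup : L ≤ D / u x := by
    rw [hL, hD, WeightedGraph.lap, WeightedGraph.lap, mul_div_assoc]
    exact mul_le_mul_of_nonneg_left hSL_le (by positivity)
  -- sum-level lower bound
  have hS_lo : (∑ y ∈ G.nbrs x, G.ω x y * (u y - u x)) / u x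
      - (∑ y ∈ G.nbrs x, G.ω x y * (u y - u x) ^ 2) / (2 * ε ^ 2)
      ≤ ∑ y ∈ G.nbrs x, G.ω x y * (Real.log (u y) - Real.log (u x)) := by
    rw [Finset.sum_div, Finset.sum_div, ← Finset.sum_sub_distrib]
    apply Finset.sum_le_sum
    intro y _
    have h := mul_le_mul_of_nonneg_left (key_log_lower hε hc (hu y)) (G.weight_nonneg x y)
    calc G.ω x y * (u y - u x) / u x - G.ω x y * (u y - u x) ^ 2 / (2 * ε ^ 2)
        = G.ω x y * ((u y - u x) / u x - (u y - u x) ^ 2 / (2 * ε ^ 2)) := by ring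
      _ ≤ G.ω x y * (Real.log (u y) - Real.log (u x)) := h
  have hlo : D / u x - Γ / ε ^ 2 ≤ L := by
    rw [hL, hD, hG, WeightedGraph.lap, WeightedGraph.lap, WeightedGraph.gradSq]
    have heq : (1 / G.m x * ∑ y ∈ G.nbrs x, G.ω x y * (u y - u x)) / u x
        - (1 / (2 * G.m x) * ∑ y ∈ G.nbrs x, G.ω x y * (u y - u x) ^ 2) / ε ^ 2
        = (1 / G.m x) * ((∑ y ∈ G.nbrs x, G.ω x y * (u y - u x)) / u x
            - (∑ y ∈ G.nbrs x, G.ω x y * (u y - u x) ^ 2) / (2 * ε ^ 2)) := by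
      field_simp
    rw [heq]
    exact mul_le_mul_of_nonneg_left hS_lo (by positivity)
  -- bound on (D / u x)^2
  have hB : (D / u x) ^ 2 ≤ D ^ 2 / ε ^ 2 := by
    rw [div_pow]
    exact div_le_div_of_nonneg_left (sq_nonneg D) (by positivity) (by nlinarith)
  have hGsq : (Γ / ε ^ 2) ^ 2 = Γ ^ 2 / ε ^ 4 := by
    rw [div_pow, ← pow_mul]
  constructor
  · rcases le_or_gt 0 L with hLpos | hLneg
    · have h1 : L ^ 2 ≤ (D / u x) ^ 2 := by nlinarith
      have h2 : (2 / ε ^ 2) * D ^ 2 = 2 * (D ^ 2 / ε ^ 2) := by ring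
      have h3 : 0 ≤ (2 / ε ^ 4) * Γ ^ 2 := by positivity
      have h4 : 0 ≤ D ^ 2 / ε ^ 2 := by positivity
      linarith
    · have h1 : L ^ 2 ≤ (D / u x - Γ / ε ^ 2) ^ 2 := by nlinarith
      have h2 : (D / u x - Γ / ε ^ 2) ^ 2 ≤ 2 * (D / u x) ^ 2 + 2 * (Γ / ε ^ 2) ^ 2 := by
        nlinarith [sq_nonneg (D / u x + Γ / ε ^ 2)]
      have h3 : (2 / ε ^ 2) * D ^ 2 = 2 * (D ^ 2 / ε ^ 2) := by ring
      have h4 : (2 / ε ^ 4) * Γ ^ 2 = 2 * (Γ ^ 2 / ε ^ 4) := by ring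
      rw [hGsq] at h2
      linarith
  · intro hLpos
    have h1 : L ^ 2 ≤ (D / u x) ^ 2 := by nlinarith
    have h2 : (1 / ε ^ 2) * D ^ 2 = D ^ 2 / ε ^ 2 := by ring
    linarith
end

section
/- Harnack inequality from Li–Yau: suppose a positive function u : (0,∞) × V → ℝ_{>0} on a weighted graph satisfies, for all t > 0 and x ∈ V, the Li–Yau inequality Γ(√u)(t,x)/u(t,x) − ∂_t √u(t,x)/√u(t,x) ≤ n/(2t), and suppose ω_min = inf ω_{xy} > 0 and m_max = sup m(x) < ∞. Then for all x, z ∈ V and 0 < t < s: u(t, x) ≤ u(s, z) (s/t)^n exp(4 m_max d(x,z)² / (ω_min (s − t))), where d is the graph distance. -/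
open scoped BigOperators

/-- The underlying simple graph of a weighted graph. -/
def WeightedGraph.toSimpleGraph {V : Type} (G : WeightedGraph V) : SimpleGraph V where
  Adj x y := x ≠ y ∧ 0 < G.ω x y
  symm := by
    constructor
    intro x y h
    exact ⟨h.1.symm, by rw [G.symm y x]; exact h.2⟩
  loopless := by
    constructor
    intro x h
    exact h.1 rfl

namespace WeightedGraph

variable {V : Type} (G : WeightedGraph V)

lemma mem_nbrs {x y : V} : y ∈ G.nbrs x ↔ G.ω x y ≠ 0 := by
  simp [nbrs, Function.mem_support]

lemma gradSq_nonneg (f : V → ℝ) (x : V) : 0 ≤ G.gradSq f x := by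
  apply mul_nonneg
  · have := G.m_pos x; positivity
  · apply Finset.sum_nonneg; intro y _; have := G.weight_nonneg x y; positivity

lemma le_gradSq {ωmin mmax : ℝ} (hωmin : 0 < ωmin)
    (hω : ∀ a b, G.ω a b ≠ 0 → ωmin ≤ G.ω a b)
    (hm : ∀ a, G.m a ≤ mmax) {x y : V} (hadj : G.toSimpleGraph.Adj y x) (f : V → ℝ) :
    ωmin / (2 * mmax) * (f x - f y) ^ 2 ≤ G.gradSq f y := by
  have hmy := G.m_pos y
  have hmmax : 0 < mmax := lt_of_lt_of_le hmy (hm y)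
  have hωyx : 0 < G.ω y x := hadj.2
  have hmem : x ∈ G.nbrs y := G.mem_nbrs.mpr hωyx.ne'
  have h1 : G.ω y x * (f x - f y) ^ 2 ≤ ∑ w ∈ G.nbrs y, G.ω y w * (f w - f y) ^ 2 :=
    Finset.single_le_sum (f := fun w => G.ω y w * (f w - f y) ^ 2)
      (fun w _ => by have := G.weight_nonneg y w; positivity) hmem
  have h2 : ωmin * (f x - f y) ^ 2 ≤ G.ω y x * (f x - f y) ^ 2 :=
    mul_le_mul_of_nonneg_right (hω y x hωyx.ne') (sq_nonneg _)
  have h3 : (1 : ℝ) / (2 * mmax) ≤ 1 / (2 * G.m y) :=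
    one_div_le_one_div_of_le (by positivity) (by linarith [hm y])
  calc ωmin / (2 * mmax) * (f x - f y) ^ 2
      = 1 / (2 * mmax) * (ωmin * (f x - f y) ^ 2) := by ring
    _ ≤ 1 / (2 * G.m y) * (ωmin * (f x - f y) ^ 2) := by
        apply mul_le_mul_of_nonneg_right h3; positivity
    _ ≤ 1 / (2 * G.m y) * (G.ω y x * (f x - f y) ^ 2) := by
        apply mul_le_mul_of_nonneg_left h2; positivity
    _ ≤ 1 / (2 * G.m y) * ∑ w ∈ G.nbrs y, G.ω y w * (f w - f y) ^ 2 := by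
        apply mul_le_mul_of_nonneg_left h1; positivity
    _ = G.gradSq f y := rfl

end WeightedGraph

section Analysis

open intervalIntegral MeasureTheory

variable {V : Type} {G : WeightedGraph V} {u : ℝ → V → ℝ} {n : ℝ}

lemma dphi (hpos : ∀ t : ℝ, 0 < t → ∀ x, 0 < u t x)
    (hheat : ∀ (x : V) (t : ℝ), 0 < t → HasDerivAt (fun τ => u τ x) (G.lap (u t) x) t)
    (x : V) {t : ℝ} (ht : 0 < t) :
    HasDerivAt (fun τ => Real.log (u τ x) + n * Real.log τ)
      (G.lap (u t) x / u t x + n / t) t := by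
  have h1 : HasDerivAt (fun τ => Real.log (u τ x)) (G.lap (u t) x / u t x) t :=
    (hheat x t ht).log (hpos t ht x).ne'
  have h2 : HasDerivAt (fun τ : ℝ => n * Real.log τ) (n / t) t := by
    have := (Real.hasDerivAt_log ht.ne').const_mul n
    simpa [div_eq_mul_inv] using this
  exact h1.add h2

lemma lap_div_ge (hpos : ∀ t : ℝ, 0 < t → ∀ x, 0 < u t x)
    (hheat : ∀ (x : V) (t : ℝ), 0 < t → HasDerivAt (fun τ => u τ x) (G.lap (u t) x) t)
    (hLY : ∀ (t : ℝ), 0 < t → ∀ x : V,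
      G.gradSq (fun y => Real.sqrt (u t y)) x / u t x -
          deriv (fun τ => Real.sqrt (u τ x)) t / Real.sqrt (u t x) ≤ n / (2 * t))
    {t : ℝ} (ht : 0 < t) (x : V) :
    2 * (G.gradSq (fun w => Real.sqrt (u t w)) x / u t x) - n / t ≤ G.lap (u t) x / u t x := by
  have hU : (0:ℝ) < u t x := hpos t ht x
  have hd : deriv (fun τ => Real.sqrt (u τ x)) t
      = G.lap (u t) x / (2 * Real.sqrt (u t x)) :=
    ((hheat x t ht).sqrt hU.ne').deriv
  have h := hLY t ht x
  rw [hd, div_div, mul_assoc, Real.mul_self_sqrt hU.le] at h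
  have hUne : u t x ≠ 0 := hU.ne'
  have e1 : 2 * (G.lap (u t) x / (2 * u t x)) = G.lap (u t) x / u t x := by
    field_simp
  have e2 : 2 * (n / (2 * t)) = n / t := by
    field_simp
  linarith

lemma logu_mono (hpos : ∀ t : ℝ, 0 < t → ∀ x, 0 < u t x)
    (hheat : ∀ (x : V) (t : ℝ), 0 < t → HasDerivAt (fun τ => u τ x) (G.lap (u t) x) t)
    (hLY : ∀ (t : ℝ), 0 < t → ∀ x : V,
      G.gradSq (fun y => Real.sqrt (u t y)) x / u t x -
          deriv (fun τ => Real.sqrt (u τ x)) t / Real.sqrt (u t x) ≤ n / (2 * t))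
    (x : V) {a b : ℝ} (ha : 0 < a) (hab : a ≤ b) :
    Real.log (u a x) + n * Real.log a ≤ Real.log (u b x) + n * Real.log b := by
  have key : MonotoneOn (fun τ => Real.log (u τ x) + n * Real.log τ) (Set.Icc a b) := by
    apply monotoneOn_of_deriv_nonneg (convex_Icc a b)
    · intro τ hτ
      exact (dphi hpos hheat x (lt_of_lt_of_le ha hτ.1)).continuousAt.continuousWithinAt
    · rw [interior_Icc]; intro τ hτ
      exact (dphi hpos hheat x (ha.trans hτ.1)).differentiableAt.differentiableWithinAt
    · rw [interior_Icc]; intro τ hτ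
      have hτ0 : 0 < τ := ha.trans hτ.1
      rw [(dphi hpos hheat x hτ0).deriv]
      have h1 := lap_div_ge hpos hheat hLY hτ0 x
      have h2 : 0 ≤ G.gradSq (fun w => Real.sqrt (u τ w)) x / u τ x :=
        div_nonneg (G.gradSq_nonneg _ _) (hpos τ hτ0 x).le
      linarith
  exact key (Set.left_mem_Icc.mpr hab) (Set.right_mem_Icc.mpr hab) hab

lemma g_contAt (hpos : ∀ t : ℝ, 0 < t → ∀ x, 0 < u t x)
    (hheat : ∀ (x : V) (t : ℝ), 0 < t → HasDerivAt (fun τ => u τ x) (G.lap (u t) x) t)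
    (y : V) {t : ℝ} (ht : 0 < t) :
    ContinuousAt (fun s => G.gradSq (fun w => Real.sqrt (u s w)) y / u s y) t := by
  have hcu : ∀ w : V, ContinuousAt (fun s => u s w) t := fun w => (hheat w t ht).continuousAt
  apply ContinuousAt.div ?_ (hcu y) (hpos t ht y).ne'
  show ContinuousAt (fun s => (1 / (2 * G.m y)) *
      ∑ w ∈ G.nbrs y, G.ω y w * (Real.sqrt (u s w) - Real.sqrt (u s y)) ^ 2) t
  apply ContinuousAt.mul continuousAt_const
  exact tendsto_finset_sum _ fun w _ =>
    (continuousAt_const.mul (((hcu w).sqrt.sub (hcu y).sqrt).pow 2))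

lemma logu_int (hpos : ∀ t : ℝ, 0 < t → ∀ x, 0 < u t x)
    (hheat : ∀ (x : V) (t : ℝ), 0 < t → HasDerivAt (fun τ => u τ x) (G.lap (u t) x) t)
    (hLY : ∀ (t : ℝ), 0 < t → ∀ x : V,
      G.gradSq (fun y => Real.sqrt (u t y)) x / u t x -
          deriv (fun τ => Real.sqrt (u τ x)) t / Real.sqrt (u t x) ≤ n / (2 * t))
    (y : V) {T1 T2 t : ℝ} (hT1 : 0 < T1) (ht : t ∈ Set.Icc T1 T2) :
    Real.log (u t y) + n * Real.log t ≤ Real.log (u T2 y) + n * Real.log T2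
      - 2 * ∫ s in t..T2, G.gradSq (fun w => Real.sqrt (u s w)) y / u s y := by
  set g : ℝ → ℝ := fun s => G.gradSq (fun w => Real.sqrt (u s w)) y / u s y with hg
  have ht0 : 0 < t := lt_of_lt_of_le hT1 ht.1
  have hT2 : 0 < T2 := lt_of_lt_of_le ht0 ht.2
  have hgc : ∀ r : ℝ, 0 < r → ContinuousAt g r := fun r hr => g_contAt hpos hheat y hr
  have hgOn : ContinuousOn g (Set.Ioi (0:ℝ)) := fun r hr => (hgc r hr).continuousWithinAt
  have hint : ∀ a b : ℝ, 0 < a → 0 < b → IntervalIntegrable g MeasureTheory.volume a b := by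
    intro a b ha hb
    apply ContinuousOn.intervalIntegrable
    apply hgOn.mono
    intro τ hτ
    simp only [Set.mem_Ioi]
    calc (0:ℝ) < min a b := lt_min ha hb
      _ ≤ τ := hτ.1
  have key : MonotoneOn
      (fun τ => Real.log (u τ y) + n * Real.log τ - 2 * ∫ s in T1..τ, g s)
      (Set.Icc T1 T2) := by
    have hFd : ∀ r : ℝ, 0 < r → HasDerivAt
        (fun τ => Real.log (u τ y) + n * Real.log τ - 2 * ∫ s in T1..τ, g s)
        (G.lap (u r) y / u r y + n / r - 2 * g r) r := by
      intro r hr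
      have h1 := dphi (n := n) hpos hheat y hr
      have h2 : HasDerivAt (fun τ => ∫ s in T1..τ, g s) (g r) r :=
        intervalIntegral.integral_hasDerivAt_right (hint T1 r hT1 hr)
          (ContinuousOn.stronglyMeasurableAtFilter isOpen_Ioi hgOn r hr) (hgc r hr)
      exact h1.sub (h2.const_mul 2)
    apply monotoneOn_of_deriv_nonneg (convex_Icc T1 T2)
    · intro τ hτ
      exact (hFd τ (lt_of_lt_of_le hT1 hτ.1)).continuousAt.continuousWithinAt
    · rw [interior_Icc]; intro τ hτ
      exact (hFd τ (hT1.trans hτ.1)).differentiableAt.differentiableWithinAt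
    · rw [interior_Icc]; intro τ hτ
      have hτ0 : 0 < τ := hT1.trans hτ.1
      rw [(hFd τ hτ0).deriv]
      have h1 := lap_div_ge hpos hheat hLY hτ0 y
      simp only [hg]
      linarith
  have h := key ht (Set.right_mem_Icc.mpr (le_trans ht.1 ht.2)) ht.2
  have hadd : (∫ s in T1..t, g s) + ∫ s in t..T2, g s = ∫ s in T1..T2, g s :=
    intervalIntegral.integral_add_adjacent_intervals (hint T1 t hT1 ht0) (hint t T2 ht0 hT2)
  simp only at h
  linarith

lemma mid_bound (hpos : ∀ t : ℝ, 0 < t → ∀ x, 0 < u t x)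
    {ωmin mmax : ℝ} (hωmin : 0 < ωmin)
    (hω : ∀ a b, G.ω a b ≠ 0 → ωmin ≤ G.ω a b) (hm : ∀ a, G.m a ≤ mmax)
    {x y : V} (hadj : G.toSimpleGraph.Adj x y) {t : ℝ} (ht : 0 < t) :
    Real.log (u t x) ≤ Real.log (u t y)
      + 2 * Real.sqrt (2 * mmax / ωmin)
          * Real.sqrt (G.gradSq (fun w => Real.sqrt (u t w)) y / u t y) := by
  have hux := hpos t ht x
  have huy := hpos t ht y
  have hmmax : 0 < mmax := lt_of_lt_of_le (G.m_pos x) (hm x)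
  have hΓnn : 0 ≤ G.gradSq (fun w => Real.sqrt (u t w)) y := G.gradSq_nonneg _ _
  rcases le_or_gt (u t x) (u t y) with hle | hlt
  · have h1 : Real.log (u t x) ≤ Real.log (u t y) := Real.log_le_log hux hle
    have h2 : 0 ≤ 2 * Real.sqrt (2 * mmax / ωmin)
        * Real.sqrt (G.gradSq (fun w => Real.sqrt (u t w)) y / u t y) := by positivity
    linarith
  · set a := Real.sqrt (u t x) with hadef
    set b := Real.sqrt (u t y) with hbdef
    have ha : 0 < a := Real.sqrt_pos.mpr hux
    have hb : 0 < b := Real.sqrt_pos.mpr huy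
    have hba : b < a := Real.sqrt_lt_sqrt huy.le hlt
    set Γ := G.gradSq (fun w => Real.sqrt (u t w)) y with hΓdef
    have hΓ : ωmin / (2 * mmax) * (a - b) ^ 2 ≤ Γ :=
      G.le_gradSq hωmin hω hm hadj.symm (fun w => Real.sqrt (u t w))
    have h1 : (a - b) ^ 2 ≤ 2 * mmax / ωmin * Γ := by
      have e : 2 * mmax / ωmin * (ωmin / (2 * mmax) * (a - b) ^ 2) = (a - b) ^ 2 := by
        field_simp
      calc (a - b) ^ 2 = 2 * mmax / ωmin * (ωmin / (2 * mmax) * (a - b) ^ 2) := e.symm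
        _ ≤ 2 * mmax / ωmin * Γ := by
            apply mul_le_mul_of_nonneg_left hΓ; positivity
    have h2 : a - b ≤ Real.sqrt (2 * mmax / ωmin) * Real.sqrt Γ := by
      have h2' := Real.sqrt_le_sqrt h1
      rwa [Real.sqrt_sq (by linarith : (0:ℝ) ≤ a - b),
        Real.sqrt_mul (by positivity : (0:ℝ) ≤ 2 * mmax / ωmin)] at h2'
    have hlog : Real.log (u t x) - Real.log (u t y) = 2 * (Real.log a - Real.log b) := by
      have e1 : u t x = a ^ 2 := (Real.sq_sqrt hux.le).symm
      have e2 : u t y = b ^ 2 := (Real.sq_sqrt huy.le).symm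
      rw [e1, e2, Real.log_pow, Real.log_pow]
      push_cast; ring
    have h4 : Real.log a - Real.log b = Real.log (a / b) := (Real.log_div ha.ne' hb.ne').symm
    have h5 : Real.log (a / b) ≤ a / b - 1 := Real.log_le_sub_one_of_pos (by positivity)
    have h6 : a / b - 1 = (a - b) / b := by field_simp
    have h7 : (a - b) / b ≤ Real.sqrt (2 * mmax / ωmin) * Real.sqrt Γ / b := by
      exact (div_le_div_iff_of_pos_right hb).mpr h2
    have h8 : Real.sqrt Γ / b = Real.sqrt (Γ / u t y) := by
      rw [Real.sqrt_div hΓnn]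
    have h9 : Real.sqrt (2 * mmax / ωmin) * Real.sqrt Γ / b
        = Real.sqrt (2 * mmax / ωmin) * Real.sqrt (Γ / u t y) := by
      rw [mul_div_assoc, h8]
    have : Real.log (u t x) - Real.log (u t y) ≤
        2 * (Real.sqrt (2 * mmax / ωmin) * Real.sqrt (Γ / u t y)) := by
      rw [hlog]
      have : Real.log a - Real.log b ≤ Real.sqrt (2 * mmax / ωmin) * Real.sqrt (Γ / u t y) := by
        rw [h4]
        calc Real.log (a / b) ≤ a / b - 1 := h5
          _ = (a - b) / b := h6
          _ ≤ Real.sqrt (2 * mmax / ωmin) * Real.sqrt Γ / b := h7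
          _ = _ := h9
      linarith
    linarith



lemma my_selection {g : ℝ → ℝ} {T1 T2 c : ℝ} (hT1 : 0 < T1) (hT : T1 < T2) (hc : 0 < c)
    (hgc : ∀ t : ℝ, 0 < t → ContinuousAt g t)
    (hg0 : ∀ t : ℝ, 0 < t → 0 ≤ g t) :
    ∃ t ∈ Set.Icc T1 T2, Real.sqrt c * Real.sqrt (g t) ≤ c / (T2 - T1) + ∫ s in t..T2, g s := by
  have hgOn : ContinuousOn g (Set.Ioi (0:ℝ)) := fun t ht => (hgc t ht).continuousWithinAt
  have hint : ∀ a b : ℝ, 0 < a → 0 < b → IntervalIntegrable g MeasureTheory.volume a b := by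
    intro a b ha hb
    apply ContinuousOn.intervalIntegrable
    apply hgOn.mono
    intro τ hτ
    simp only [Set.mem_Ioi]
    calc (0:ℝ) < min a b := lt_min ha hb
      _ ≤ τ := hτ.1
  have hGd : ∀ t : ℝ, 0 < t → HasDerivAt (fun r => ∫ s in r..T2, g s) (-(g t)) t := by
    intro t ht
    have h1 : HasDerivAt (fun r => ∫ s in T2..r, g s) (g t) t :=
      integral_hasDerivAt_right (hint T2 t (hT1.trans hT) ht)
        (ContinuousOn.stronglyMeasurableAtFilter isOpen_Ioi hgOn t ht)
        (hgc t ht)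
    have heq : (fun r : ℝ => ∫ s in r..T2, g s) = fun r => -(∫ s in T2..r, g s) := by
      funext r; rw [intervalIntegral.integral_symm]
    rw [heq]; exact h1.neg
  -- nonnegativity of tail integrals
  have hG0 : ∀ t ∈ Set.Icc T1 T2, 0 ≤ ∫ s in t..T2, g s := by
    intro t ht
    apply intervalIntegral.integral_nonneg ht.2
    intro s hs
    exact hg0 s (lt_of_lt_of_le (lt_of_lt_of_le hT1 ht.1) hs.1)
  set D : ℝ → ℝ := fun t => c / (T2 - T1) + ∫ s in t..T2, g s with hD
  have hDpos : ∀ t ∈ Set.Icc T1 T2, 0 < D t := by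
    intro t ht
    have : 0 < c / (T2 - T1) := div_pos hc (by linarith)
    have := hG0 t ht
    simp only [hD]; linarith
  by_contra hcon
  push_neg at hcon
  -- hcon : ∀ t ∈ Icc, c/(T2-T1) + ∫ < sqrt c * sqrt (g t)
  set K : ℝ → ℝ := fun t => (D t)⁻¹ - t / c with hK
  have hKd : ∀ t ∈ Set.Icc T1 T2, HasDerivAt K (g t / (D t) ^ 2 - 1 / c) t := by
    intro t ht
    have htpos : 0 < t := lt_of_lt_of_le hT1 ht.1
    have hDd : HasDerivAt D (-(g t)) t := (hGd t htpos).const_add _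
    have hinv := hDd.inv (hDpos t ht).ne'
    have hlin : HasDerivAt (fun r : ℝ => r / c) (1 / c) t := by
      simpa using (hasDerivAt_id t).div_const c
    have := hinv.sub hlin
    have e : g t / D t ^ 2 - 1 / c = - -g t / D t ^ 2 - 1 / c := by ring
    rw [e]; exact this
  have hmono : StrictMonoOn K (Set.Icc T1 T2) := by
    apply strictMonoOn_of_deriv_pos (convex_Icc T1 T2)
    · intro t ht; exact (hKd t ht).continuousAt.continuousWithinAt
    · intro t ht
      rw [interior_Icc] at ht
      have ht' : t ∈ Set.Icc T1 T2 := Set.mem_Icc_of_Ioo ht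
      rw [(hKd t ht').deriv]
      have h1 := hcon t ht'
      have hDp := hDpos t ht'
      have hg0' : 0 ≤ g t := hg0 t (lt_of_lt_of_le hT1 ht'.1)
      have hsq : (D t) ^ 2 < c * g t := by
        have : (D t) ^ 2 < (Real.sqrt c * Real.sqrt (g t)) ^ 2 := by
          apply pow_lt_pow_left₀ h1 hDp.le; norm_num
        calc (D t)^2 < (Real.sqrt c * Real.sqrt (g t))^2 := this
          _ = c * g t := by
            rw [mul_pow, Real.sq_sqrt hc.le, Real.sq_sqrt hg0']
      rw [sub_pos, div_lt_div_iff₀ hc (by positivity)]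
      linarith
  have hKlt := hmono (Set.left_mem_Icc.mpr hT.le) (Set.right_mem_Icc.mpr hT.le) hT
  have hHT2 : D T2 = c / (T2 - T1) := by
    simp [hD, intervalIntegral.integral_same]
  have hHT1 : 0 < (D T1)⁻¹ := inv_pos.mpr (hDpos T1 (Set.left_mem_Icc.mpr hT.le))
  have hinvT2 : (D T2)⁻¹ = (T2 - T1) / c := by
    rw [hHT2, inv_div]
  simp only [hK] at hKlt
  rw [hinvT2] at hKlt
  -- hKlt : (D T1)⁻¹ - T1 / c < (T2 - T1)/c - T2 / c
  have : (T2 - T1) / c - T2 / c = -(T1 / c) := by field_simp; ring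
  rw [this] at hKlt
  linarith

lemma neighbor_step {ωmin mmax : ℝ} (hωmin : 0 < ωmin)
    (hω : ∀ a b, G.ω a b ≠ 0 → ωmin ≤ G.ω a b) (hm : ∀ a, G.m a ≤ mmax)
    (hpos : ∀ t : ℝ, 0 < t → ∀ x, 0 < u t x)
    (hheat : ∀ (x : V) (t : ℝ), 0 < t → HasDerivAt (fun τ => u τ x) (G.lap (u t) x) t)
    (hLY : ∀ (t : ℝ), 0 < t → ∀ x : V,
      G.gradSq (fun y => Real.sqrt (u t y)) x / u t x -
          deriv (fun τ => Real.sqrt (u τ x)) t / Real.sqrt (u t x) ≤ n / (2 * t))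
    {x y : V} (hadj : G.toSimpleGraph.Adj x y) {T1 T2 : ℝ} (hT1 : 0 < T1) (hT : T1 < T2) :
    u T1 x ≤ u T2 y * (T2 / T1) ^ n * Real.exp (4 * mmax / (ωmin * (T2 - T1))) := by
  have hmmax : 0 < mmax := lt_of_lt_of_le (G.m_pos x) (hm x)
  have hc : 0 < 2 * mmax / ωmin := by positivity
  obtain ⟨t, ht, hsel⟩ := my_selection (g := fun s => G.gradSq (fun w => Real.sqrt (u s w)) y / u s y)
    hT1 hT hc (fun r hr => g_contAt hpos hheat y hr)
    (fun r hr => div_nonneg (G.gradSq_nonneg _ _) (hpos r hr y).le)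
  have ht0 : 0 < t := lt_of_lt_of_le hT1 ht.1
  have hA := logu_mono hpos hheat hLY x hT1 ht.1
  have hB := mid_bound hpos hωmin hω hm hadj ht0
  have hC := logu_int hpos hheat hLY y hT1 ht
  have hsum : Real.log (u T1 x) ≤ Real.log (u T2 y) + n * (Real.log T2 - Real.log T1)
      + 2 * (2 * mmax / ωmin / (T2 - T1)) := by
    linarith
  have h2 : u T1 x ≤ Real.exp (Real.log (u T2 y) + n * (Real.log T2 - Real.log T1)
      + 2 * (2 * mmax / ωmin / (T2 - T1))) := by
    calc u T1 x = Real.exp (Real.log (u T1 x)) := (Real.exp_log (hpos T1 hT1 x)).symm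
      _ ≤ _ := Real.exp_le_exp.mpr hsum
  rw [Real.exp_add, Real.exp_add, Real.exp_log (hpos T2 (hT1.trans hT) y)] at h2
  have h3 : Real.exp (n * (Real.log T2 - Real.log T1)) = (T2 / T1) ^ n := by
    rw [← Real.log_div (by linarith : T2 ≠ 0) hT1.ne',
      Real.rpow_def_of_pos (div_pos (hT1.trans hT) hT1), mul_comm]
  have h4 : 2 * (2 * mmax / ωmin / (T2 - T1)) = 4 * mmax / (ωmin * (T2 - T1)) := by
    have h5 : T2 - T1 ≠ 0 := by linarith
    field_simp; ring
  rw [h3, h4] at h2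
  exact h2

lemma walk_chain {ωmin mmax : ℝ} (hωmin : 0 < ωmin)
    (hω : ∀ a b, G.ω a b ≠ 0 → ωmin ≤ G.ω a b) (hm : ∀ a, G.m a ≤ mmax)
    (hpos : ∀ t : ℝ, 0 < t → ∀ x, 0 < u t x)
    (hheat : ∀ (x : V) (t : ℝ), 0 < t → HasDerivAt (fun τ => u τ x) (G.lap (u t) x) t)
    (hLY : ∀ (t : ℝ), 0 < t → ∀ x : V,
      G.gradSq (fun y => Real.sqrt (u t y)) x / u t x -
          deriv (fun τ => Real.sqrt (u τ x)) t / Real.sqrt (u t x) ≤ n / (2 * t)) :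
    ∀ {x z : V} (w : G.toSimpleGraph.Walk x z) (t h : ℝ), 0 < t → 0 < h →
      u t x ≤ u (t + w.length * h) z * ((t + w.length * h) / t) ^ n
        * Real.exp (w.length * (4 * mmax / (ωmin * h))) := by
  intro x z w
  induction w with
  | nil =>
    intro t h ht hh
    simp [div_self ht.ne']
  | @cons x y z hadj p ih =>
    intro t h ht hh
    simp only [SimpleGraph.Walk.length_cons, Nat.cast_add, Nat.cast_one]
    have hth : (0:ℝ) < t + h := by linarith
    have hL0 : (0:ℝ) ≤ (p.length : ℝ) := Nat.cast_nonneg _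
    have step := neighbor_step (n := n) hωmin hω hm hpos hheat hLY hadj ht
      (by linarith : t < t + h)
    have ihy := ih (t + h) h hth hh
    have harg : (t + h) + (p.length : ℝ) * h = t + ((p.length : ℝ) + 1) * h := by ring
    rw [harg] at ihy
    have hmmax : 0 < mmax := lt_of_lt_of_le (G.m_pos x) (hm x)
    set L : ℝ := (p.length : ℝ) with hL
    set E : ℝ := 4 * mmax / (ωmin * h) with hE
    have hE0 : 0 ≤ E := by rw [hE]; positivity
    have hP : (0:ℝ) ≤ ((t + h) / t) ^ n * Real.exp E := by positivity
    have hmul := mul_le_mul_of_nonneg_right ihy hP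
    have hTpos : (0:ℝ) < t + (L + 1) * h := by
      have : 0 ≤ L * h := by positivity
      linarith
    calc u t x ≤ u (t + h) y * (((t + h) / t) ^ n * Real.exp E) := by
          rw [← mul_assoc]
          convert step using 3
          rw [hE]; field_simp
          rw [add_sub_cancel_left, div_self hh.ne']
      _ ≤ (u (t + (L + 1) * h) z * ((t + (L + 1) * h) / (t + h)) ^ n * Real.exp (L * E))
            * (((t + h) / t) ^ n * Real.exp E) := hmul
      _ = u (t + (L + 1) * h) z
            * (((t + (L + 1) * h) / (t + h)) ^ n * ((t + h) / t) ^ n)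
            * (Real.exp (L * E) * Real.exp E) := by ring
      _ = u (t + (L + 1) * h) z * ((t + (L + 1) * h) / t) ^ n * Real.exp ((L + 1) * E) := by
          rw [← Real.mul_rpow (by positivity) (by positivity), ← Real.exp_add]
          congr 2
          · field_simp
          · ring

end Analysis

theorem harnack_from_li_yau {V : Type} (G : WeightedGraph V)
    (hconn : G.toSimpleGraph.Connected)
    (u : ℝ → V → ℝ) (n ωmin mmax : ℝ) (hn : 0 < n)
    (hωmin : 0 < ωmin) (hω : ∀ x y, G.ω x y ≠ 0 → ωmin ≤ G.ω x y)
    (hm : ∀ x, G.m x ≤ mmax)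
    (hpos : ∀ t : ℝ, 0 < t → ∀ x, 0 < u t x)
    (hheat : ∀ (x : V) (t : ℝ), 0 < t → HasDerivAt (fun τ => u τ x) (G.lap (u t) x) t)
    (hLY : ∀ (t : ℝ), 0 < t → ∀ x : V,
      G.gradSq (fun y => Real.sqrt (u t y)) x / u t x -
          deriv (fun τ => Real.sqrt (u τ x)) t / Real.sqrt (u t x) ≤ n / (2 * t)) :
    ∀ (x z : V) (t s : ℝ), 0 < t → t < s →
      u t x ≤ u s z * (s / t) ^ n *
        Real.exp (4 * mmax * ((G.toSimpleGraph.dist x z : ℝ)) ^ 2 / (ωmin * (s - t))) := by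
  intro x z t s ht hts
  have hs : 0 < s := ht.trans hts
  rcases Nat.eq_zero_or_pos (G.toSimpleGraph.dist x z) with hd0 | hdpos
  · have hxz : x = z := (hconn.dist_eq_zero_iff).mp hd0
    subst hxz
    have hA := logu_mono hpos hheat hLY x ht hts.le
    have hlog : Real.log (u t x) ≤ Real.log (u s x) + n * (Real.log s - Real.log t) := by
      linarith
    have h2 : u t x ≤ Real.exp (Real.log (u s x) + n * (Real.log s - Real.log t)) := by
      calc u t x = Real.exp (Real.log (u t x)) := (Real.exp_log (hpos t ht x)).symm
        _ ≤ _ := Real.exp_le_exp.mpr hlog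
    rw [Real.exp_add, Real.exp_log (hpos s hs x)] at h2
    have h3 : Real.exp (n * (Real.log s - Real.log t)) = (s / t) ^ n := by
      rw [← Real.log_div hs.ne' ht.ne', Real.rpow_def_of_pos (div_pos hs ht), mul_comm]
    rw [h3] at h2
    have hexp : (4 : ℝ) * mmax * ((G.toSimpleGraph.dist x x : ℝ)) ^ 2 / (ωmin * (s - t)) = 0 := by
      rw [hd0]; norm_num
    rw [hexp, Real.exp_zero, mul_one]
    exact h2
  · obtain ⟨p, hp⟩ := hconn.exists_walk_length_eq_dist x z
    have hdR : (0:ℝ) < (G.toSimpleGraph.dist x z : ℝ) := Nat.cast_pos.mpr hdpos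
    set h : ℝ := (s - t) / (G.toSimpleGraph.dist x z : ℝ) with hh'
    have hh : 0 < h := div_pos (by linarith) hdR
    have hchain := walk_chain (n := n) hωmin hω hm hpos hheat hLY p t h ht hh
    rw [hp] at hchain
    have hne1 : ((G.toSimpleGraph.dist x z : ℝ)) ≠ 0 := hdR.ne'
    have hne2 : ωmin ≠ 0 := hωmin.ne'
    have hne3 : s - t ≠ 0 := by linarith
    have harg : t + (G.toSimpleGraph.dist x z : ℝ) * h = s := by
      rw [hh']; field_simp; ring
    have hexp : (G.toSimpleGraph.dist x z : ℝ) * (4 * mmax / (ωmin * h))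
        = 4 * mmax * ((G.toSimpleGraph.dist x z : ℝ)) ^ 2 / (ωmin * (s - t)) := by
      rw [hh']; field_simp
    rw [harg, hexp] at hchain
    exact hchain
end
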